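/- Let α = 1 − c(1−p), p̃ = p/α, and let π^{(p̃)} be the stationary distribution of the chain with parameters (p̃, c). Suppose j* ∈ ℤ₊ maximizes π^{(p̃)}(·). Then for all x, y ∈ ℤ₊ with x < y: π^{(p̃)}(j*) ≤ liminf_{t→∞} d_t(x,y)/((y−x)·α^t) ≤ limsup_{t→∞} d_t(x,y)/((y−x)·α^t) ≤ 1. In particular, lim_{t→∞} (1/t)·ln d_t(x,y) = ln α. -/

import Mathlib

open scoped BigOperators
open Filter

noncomputable section

/-- Probability mass function of a Binomial(n, ε) random variable, evaluated at k. -/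
def binomPMF (n : ℕ) (ε : ℝ) (k : ℕ) : ℝ :=
  if k ≤ n then (n.choose k : ℝ) * ε ^ k * (1 - ε) ^ (n - k) else 0

/-- Transition function `p^{p,c}` of the random walk with binomial catastrophes:
`p^{p,c}(i, i+1) = p` and `p^{p,c}(i, j) = (1-p) C(i,j) (1-c)^j c^(i-j)` for `j ≤ i`. -/
def stepFn (p c : ℝ) (i j : ℕ) : ℝ :=
  (if j = i + 1 then p else 0) + (if j ≤ i then (1 - p) * binomPMF i (1 - c) j else 0)

/-- `law p c x t j = P_x(X_t = j)`, the time-`t` distribution of the chain started at `x`. -/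
def law (p c : ℝ) (x : ℕ) : ℕ → ℕ → ℝ
  | 0, j => if j = x then 1 else 0
  | t + 1, j => ∑' i, law p c x t i * stepFn p c i j

/-- Mass that a probability mass function assigns to a set `A ⊆ ℕ`. -/
def massOf (q : ℕ → ℝ) (A : Set ℕ) : ℝ := ∑' j, A.indicator q j

/-- Total variation distance between two distributions on ℕ (given by their pmfs):
the maximum over subsets `A ⊆ ℕ` of `|Q₁(A) - Q₂(A)|`. -/
def tvDist (q₁ q₂ : ℕ → ℝ) : ℝ := ⨆ A : Set ℕ, |massOf q₁ A - massOf q₂ A|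

/-- shift: shf f 0 = 0, shf f (j+1) = f j -/
def shf (f : ℕ → ℝ) : ℕ → ℝ
  | 0 => 0
  | j + 1 => f j

lemma binomPMF_eq_zero {n k : ℕ} (h : n < k) (ε : ℝ) : binomPMF n ε k = 0 := by
  simp [binomPMF, Nat.not_le.mpr h]

lemma binomPMF_nonneg {ε : ℝ} (h0 : 0 ≤ ε) (h1 : ε ≤ 1) (n k : ℕ) : 0 ≤ binomPMF n ε k := by
  unfold binomPMF
  split_ifs
  · exact mul_nonneg (mul_nonneg (Nat.cast_nonneg _) (pow_nonneg h0 _))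
      (pow_nonneg (by linarith) _)
  · exact le_rfl

lemma binomPMF_sum (n : ℕ) (ε : ℝ) : ∑ j ∈ Finset.range (n + 1), binomPMF n ε j = 1 := by
  have h := add_pow ε (1 - ε) n
  have h2 : ε + (1 - ε) = 1 := by ring
  rw [h2, one_pow] at h
  rw [h]
  apply Finset.sum_congr rfl
  intro j hj
  rw [Finset.mem_range] at hj
  simp only [binomPMF, if_pos (Nat.lt_succ_iff.mp hj)]
  ring

lemma binomPMF_succ (n : ℕ) (ε : ℝ) (j : ℕ) :
    binomPMF (n + 1) ε j = (1 - ε) * binomPMF n ε j + ε * shf (binomPMF n ε) j := by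
  cases j with
  | zero => simp [binomPMF, shf]; ring
  | succ k =>
    simp only [shf]
    unfold binomPMF
    rcases lt_trichotomy k n with h | h | h
    · have h1 : k + 1 ≤ n + 1 := by omega
      have h2 : k + 1 ≤ n := h
      have h3 : k ≤ n := by omega
      simp only [if_pos h1, if_pos h2, if_pos h3]
      rw [Nat.choose_succ_succ, Nat.cast_add]
      have e1 : n + 1 - (k+1) = n - k := by omega
      have e2 : n - (k+1) + 1 = n - k := by omega
      rw [e1, ← e2]
      ring
    · subst h
      rw [if_pos (le_refl (k+1)), if_neg (by omega : ¬ k + 1 ≤ k), if_pos (le_refl k)]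
      simp [Nat.choose_self]
      ring
    · rw [if_neg (by omega : ¬ k + 1 ≤ n + 1), if_neg (by omega : ¬ k + 1 ≤ n),
        if_neg (by omega : ¬ k ≤ n)]
      ring

lemma binomPMF_le_one {ε : ℝ} (h0 : 0 ≤ ε) (h1 : ε ≤ 1) (n k : ℕ) : binomPMF n ε k ≤ 1 := by
  rcases le_or_gt k n with h | h
  · calc binomPMF n ε k
        ≤ ∑ j ∈ Finset.range (n + 1), binomPMF n ε j :=
          Finset.single_le_sum (fun j _ => binomPMF_nonneg h0 h1 n j)
            (Finset.mem_range.mpr (by omega))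
      _ = 1 := binomPMF_sum n ε
  · rw [binomPMF_eq_zero h]; norm_num

lemma stepFn_eq (p c : ℝ) (i j : ℕ) :
    stepFn p c i j = (if j = i + 1 then p else 0) + (1 - p) * binomPMF i (1 - c) j := by
  unfold stepFn
  congr 1
  split_ifs with h
  · rfl
  · rw [binomPMF_eq_zero (by omega), mul_zero]

lemma stepFn_eq_zero {i j : ℕ} (h : i + 1 < j) (p c : ℝ) : stepFn p c i j = 0 := by
  rw [stepFn_eq, if_neg (by omega), binomPMF_eq_zero (by omega), mul_zero, add_zero]

lemma stepFn_nonneg {p c : ℝ} (hp0 : 0 ≤ p) (hp1 : p ≤ 1) (hc0 : 0 ≤ c) (hc1 : c ≤ 1)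
    (i j : ℕ) : 0 ≤ stepFn p c i j := by
  rw [stepFn_eq]
  have hb := binomPMF_nonneg (ε := 1 - c) (by linarith) (by linarith) i j
  split_ifs <;> nlinarith

lemma stepFn_le_one {p c : ℝ} (hp0 : 0 ≤ p) (hp1 : p ≤ 1) (hc0 : 0 ≤ c) (hc1 : c ≤ 1)
    (i j : ℕ) : stepFn p c i j ≤ 1 := by
  rw [stepFn_eq]
  have hb := binomPMF_le_one (ε := 1 - c) (by linarith) (by linarith) i j
  have hb0 := binomPMF_nonneg (ε := 1 - c) (by linarith) (by linarith) i j
  split_ifs <;> nlinarith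

lemma stepFn_sum {i N : ℕ} (hN : i + 2 ≤ N) (p c : ℝ) :
    ∑ j ∈ Finset.range N, stepFn p c i j = 1 := by
  have h1 : ∑ j ∈ Finset.range N, stepFn p c i j
      = ∑ j ∈ Finset.range (i + 2), stepFn p c i j := by
    refine (Finset.sum_subset ?_ ?_).symm
    · intro a ha; rw [Finset.mem_range] at *; omega
    · intro a _ ha; rw [Finset.mem_range] at ha; exact stepFn_eq_zero (by omega) p c
  rw [h1]
  simp only [stepFn_eq]
  rw [Finset.sum_add_distrib]
  have h2 : ∑ j ∈ Finset.range (i + 2), (if j = i + 1 then p else 0) = p := by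
    rw [Finset.sum_ite_eq' (Finset.range (i + 2)) (i + 1) (fun _ => p)]
    rw [if_pos (Finset.mem_range.mpr (by omega))]
  have h3 : ∑ j ∈ Finset.range (i + 2), (1 - p) * binomPMF i (1 - c) j = (1 - p) := by
    rw [← Finset.mul_sum]
    have : ∑ j ∈ Finset.range (i + 2), binomPMF i (1 - c) j
        = ∑ j ∈ Finset.range (i + 1), binomPMF i (1 - c) j := by
      rw [Finset.sum_range_succ, binomPMF_eq_zero (by omega), add_zero]
    rw [this, binomPMF_sum, mul_one]
  rw [h2, h3]; ring

lemma stepFn_intertwine (p c pt : ℝ) (hpt : (1 - c * (1 - p)) * pt = p) (i j : ℕ) :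
    stepFn p c (i + 1) j - stepFn p c i j
      = (1 - c * (1 - p)) * (shf (stepFn pt c i) j - stepFn pt c i j) := by
  have key : (1 - c * (1 - p)) * (1 - pt) = (1 - p) * (1 - c) := by
    calc (1 - c * (1 - p)) * (1 - pt) = (1 - c * (1 - p)) - (1 - c * (1 - p)) * pt := by ring
    _ = (1 - c * (1 - p)) - p := by rw [hpt]
    _ = (1 - p) * (1 - c) := by ring
  cases j with
  | zero =>
    simp only [stepFn_eq, shf, binomPMF_succ]
    split_ifs <;> try omega
    all_goals try exact False.elim (by assumption)
    all_goals linear_combination (binomPMF i (1 - c) 0) * key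
  | succ k =>
    simp only [shf, stepFn_eq, binomPMF_succ]
    split_ifs <;> try omega
    all_goals try exact False.elim (by assumption)
    all_goals
      first
      | linear_combination (binomPMF i (1-c) (k+1) - binomPMF i (1-c) k) * key
      | linear_combination (binomPMF i (1-c) (k+1) - binomPMF i (1-c) k) * key - hpt
      | linear_combination (binomPMF i (1-c) (k+1) - binomPMF i (1-c) k) * key + hpt
      | linear_combination (binomPMF i (1-c) k - binomPMF i (1-c) (k+1)) * key
      | linear_combination (binomPMF i (1-c) k - binomPMF i (1-c) (k+1)) * key - hpt
      | linear_combination (binomPMF i (1-c) k - binomPMF i (1-c) (k+1)) * key + hpt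

lemma law_eq_zero (p c : ℝ) (x : ℕ) : ∀ t j, x + t < j → law p c x t j = 0 := by
  intro t
  induction t with
  | zero => intro j hj; simp only [law]; rw [if_neg (by omega)]
  | succ t ih =>
    intro j hj
    show (∑' i, law p c x t i * stepFn p c i j) = 0
    have : (fun i => law p c x t i * stepFn p c i j) = fun _ => 0 := by
      funext i
      rcases le_or_gt i (x + t) with h | h
      · rw [stepFn_eq_zero (by omega), mul_zero]
      · rw [ih i (by omega), zero_mul]
    rw [this, tsum_zero]

lemma law_succ' (p c : ℝ) (x t j N : ℕ) (hN : x + t + 1 ≤ N) :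
    law p c x (t + 1) j = ∑ i ∈ Finset.range N, law p c x t i * stepFn p c i j := by
  show (∑' i, law p c x t i * stepFn p c i j) = _
  apply tsum_eq_sum
  intro b hb
  rw [Finset.mem_range] at hb
  rw [law_eq_zero p c x t b (by omega), zero_mul]

lemma law_nonneg {p c : ℝ} (hp0 : 0 ≤ p) (hp1 : p ≤ 1) (hc0 : 0 ≤ c) (hc1 : c ≤ 1)
    (x : ℕ) : ∀ t j, 0 ≤ law p c x t j := by
  intro t
  induction t with
  | zero => intro j; simp only [law]; split_ifs <;> norm_num
  | succ t ih =>
    intro j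
    rw [law_succ' p c x t j (x + t + 1) le_rfl]
    exact Finset.sum_nonneg fun i _ =>
      mul_nonneg (ih i) (stepFn_nonneg hp0 hp1 hc0 hc1 i j)

lemma law_sum (p c : ℝ) (x : ℕ) : ∀ t N, x + t + 1 ≤ N →
    ∑ j ∈ Finset.range N, law p c x t j = 1 := by
  intro t
  induction t with
  | zero =>
    intro N hN
    simp only [law]
    rw [Finset.sum_ite_eq' (Finset.range N) x (fun _ => (1:ℝ))]
    rw [if_pos (Finset.mem_range.mpr (by omega))]
  | succ t ih =>
    intro N hN
    have e : ∀ j, law p c x (t+1) j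
        = ∑ i ∈ Finset.range (x + t + 1), law p c x t i * stepFn p c i j :=
      fun j => law_succ' p c x t j (x + t + 1) le_rfl
    calc ∑ j ∈ Finset.range N, law p c x (t+1) j
        = ∑ j ∈ Finset.range N, ∑ i ∈ Finset.range (x + t + 1),
            law p c x t i * stepFn p c i j := by
          exact Finset.sum_congr rfl fun j _ => e j
      _ = ∑ i ∈ Finset.range (x + t + 1), ∑ j ∈ Finset.range N,
            law p c x t i * stepFn p c i j := Finset.sum_comm
      _ = ∑ i ∈ Finset.range (x + t + 1), law p c x t i := by
          apply Finset.sum_congr rfl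
          intro i hi
          rw [Finset.mem_range] at hi
          rw [← Finset.mul_sum, stepFn_sum (by omega), mul_one]
      _ = 1 := ih (x + t + 1) le_rfl

lemma law_le_one {p c : ℝ} (hp0 : 0 ≤ p) (hp1 : p ≤ 1) (hc0 : 0 ≤ c) (hc1 : c ≤ 1)
    (x t j : ℕ) : law p c x t j ≤ 1 := by
  rcases le_or_gt j (x + t) with h | h
  · calc law p c x t j
        ≤ ∑ k ∈ Finset.range (x + t + 1), law p c x t k :=
          Finset.single_le_sum (fun k _ => law_nonneg hp0 hp1 hc0 hc1 x t k)
            (Finset.mem_range.mpr (by omega))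
      _ = 1 := law_sum p c x t (x + t + 1) le_rfl
  · rw [law_eq_zero p c x t j h]; norm_num

lemma law_diff (p c pt : ℝ) (hpt : (1 - c * (1 - p)) * pt = p) (z : ℕ) :
    ∀ t j, law p c (z + 1) t j - law p c z t j
      = (1 - c * (1 - p)) ^ t * (shf (law pt c z t) j - law pt c z t j) := by
  intro t
  induction t with
  | zero =>
    intro j
    cases j with
    | zero =>
      simp only [law, shf, pow_zero]
      split_ifs <;> first | omega | exact False.elim (by assumption) | ring
    | succ k =>
      simp only [law, shf, pow_zero]
      split_ifs <;> first | omega | exact False.elim (by assumption) | ring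
  | succ t ih =>
    intro j
    set α := 1 - c * (1 - p) with hα
    have hy := law_succ' p c (z+1) t j (z + t + 2) (by omega)
    have hx := law_succ' p c z t j (z + t + 2) (by omega)
    rw [hy, hx, ← Finset.sum_sub_distrib]
    have e1 : ∀ i, law p c (z+1) t i * stepFn p c i j - law p c z t i * stepFn p c i j
        = α ^ t * ((shf (law pt c z t) i - law pt c z t i) * stepFn p c i j) := by
      intro i
      rw [← sub_mul, ih i]; ring
    rw [Finset.sum_congr rfl fun i _ => e1 i, ← Finset.mul_sum]
    have e2 : ∑ i ∈ Finset.range (z + t + 2),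
        (shf (law pt c z t) i - law pt c z t i) * stepFn p c i j
        = ∑ i ∈ Finset.range (z + t + 1),
            law pt c z t i * (stepFn p c (i+1) j - stepFn p c i j) := by
      have l1 : ∑ i ∈ Finset.range (z + t + 2), shf (law pt c z t) i * stepFn p c i j
          = ∑ i ∈ Finset.range (z + t + 1), law pt c z t i * stepFn p c (i+1) j := by
        rw [Finset.sum_range_succ' (fun i => shf (law pt c z t) i * stepFn p c i j) (z+t+1)]
        simp only [shf, zero_mul, add_zero]
      have l2 : ∑ i ∈ Finset.range (z + t + 2), law pt c z t i * stepFn p c i j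
          = ∑ i ∈ Finset.range (z + t + 1), law pt c z t i * stepFn p c i j := by
        rw [Finset.sum_range_succ, law_eq_zero pt c z t (z+t+1) (by omega), zero_mul, add_zero]
      calc ∑ i ∈ Finset.range (z + t + 2),
            (shf (law pt c z t) i - law pt c z t i) * stepFn p c i j
          = ∑ i ∈ Finset.range (z + t + 2), shf (law pt c z t) i * stepFn p c i j
            - ∑ i ∈ Finset.range (z + t + 2), law pt c z t i * stepFn p c i j := by
            rw [← Finset.sum_sub_distrib]
            exact Finset.sum_congr rfl fun i _ => by ring
        _ = ∑ i ∈ Finset.range (z + t + 1), law pt c z t i * stepFn p c (i+1) j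
            - ∑ i ∈ Finset.range (z + t + 1), law pt c z t i * stepFn p c i j := by
            rw [l1, l2]
        _ = ∑ i ∈ Finset.range (z + t + 1),
              law pt c z t i * (stepFn p c (i+1) j - stepFn p c i j) := by
            rw [← Finset.sum_sub_distrib]
            exact Finset.sum_congr rfl fun i _ => by ring
    rw [e2]
    have e3 : ∀ i, law pt c z t i * (stepFn p c (i+1) j - stepFn p c i j)
        = α * (law pt c z t i * (shf (stepFn pt c i) j - stepFn pt c i j)) := by
      intro i
      rw [stepFn_intertwine p c pt hpt i j]; ring
    rw [Finset.sum_congr rfl fun i _ => e3 i, ← Finset.mul_sum]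
    have e4 : ∑ i ∈ Finset.range (z + t + 1),
        law pt c z t i * (shf (stepFn pt c i) j - stepFn pt c i j)
        = shf (law pt c z (t+1)) j - law pt c z (t+1) j := by
      have r1 : ∑ i ∈ Finset.range (z + t + 1), law pt c z t i * stepFn pt c i j
          = law pt c z (t+1) j := (law_succ' pt c z t j (z+t+1) le_rfl).symm
      have r2 : ∑ i ∈ Finset.range (z + t + 1), law pt c z t i * shf (stepFn pt c i) j
          = shf (law pt c z (t+1)) j := by
        cases j with
        | zero => simp only [shf, mul_zero, Finset.sum_const_zero]
        | succ k =>
          simp only [shf]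
          exact (law_succ' pt c z t k (z+t+1) le_rfl).symm
      calc ∑ i ∈ Finset.range (z + t + 1),
            law pt c z t i * (shf (stepFn pt c i) j - stepFn pt c i j)
          = ∑ i ∈ Finset.range (z + t + 1), law pt c z t i * shf (stepFn pt c i) j
            - ∑ i ∈ Finset.range (z + t + 1), law pt c z t i * stepFn pt c i j := by
            rw [← Finset.sum_sub_distrib]
            exact Finset.sum_congr rfl fun i _ => by ring
        _ = shf (law pt c z (t+1)) j - law pt c z (t+1) j := by rw [r1, r2]
    rw [e4, hα]
    ring

lemma law_diff_gap (p c pt : ℝ) (hpt : (1 - c * (1 - p)) * pt = p) {x y : ℕ} (hxy : x ≤ y)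
    (t j : ℕ) :
    law p c y t j - law p c x t j
      = (1 - c * (1 - p)) ^ t * ∑ w ∈ Finset.range (y - x),
          (shf (law pt c (x + w) t) j - law pt c (x + w) t j) := by
  induction y, hxy using Nat.le_induction with
  | base => simp
  | succ y hy ih =>
    have e : y + 1 - x = (y - x) + 1 := by omega
    rw [e, Finset.sum_range_succ, mul_add]
    have e2 : x + (y - x) = y := by omega
    rw [e2]
    rw [← ih]
    have := law_diff p c pt hpt y t j
    rw [show y + 1 = y + 1 from rfl] at this
    linarith [this]

open scoped Classical in
lemma mass_diff (p c pt : ℝ) (hpt : (1 - c * (1 - p)) * pt = p) {x y : ℕ} (hxy : x ≤ y)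
    (t : ℕ) (A : Set ℕ) :
    massOf (law p c y t) A - massOf (law p c x t) A
      = (1 - c * (1 - p)) ^ t * ∑ w ∈ Finset.range (y - x),
          ((∑ j ∈ (Finset.range (y + t + 1)).filter (· ∈ A), shf (law pt c (x + w) t) j)
            - ∑ j ∈ (Finset.range (y + t + 1)).filter (· ∈ A), law pt c (x + w) t j) := by
  set N := y + t + 1 with hN
  set F := (Finset.range N).filter (· ∈ A) with hF
  have hmass : ∀ z : ℕ, z ≤ y → massOf (law p c z t) A = ∑ j ∈ F, law p c z t j := by
    intro z hz
    have h1 : massOf (law p c z t) A = ∑ j ∈ Finset.range N, A.indicator (law p c z t) j := by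
      apply tsum_eq_sum
      intro b hb
      rw [Finset.mem_range] at hb
      have : law p c z t b = 0 := law_eq_zero p c z t b (by omega)
      simp [Set.indicator_apply, this]
    rw [h1, hF, Finset.sum_filter]
    apply Finset.sum_congr rfl
    intro j _
    rw [Set.indicator_apply]
  rw [hmass y le_rfl, hmass x hxy, ← Finset.sum_sub_distrib]
  have e : ∀ j, law p c y t j - law p c x t j
      = (1 - c * (1 - p)) ^ t * ∑ w ∈ Finset.range (y - x),
          (shf (law pt c (x + w) t) j - law pt c (x + w) t j) :=
    fun j => law_diff_gap p c pt hpt hxy t j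
  rw [Finset.sum_congr rfl fun j _ => e j, ← Finset.mul_sum]
  congr 1
  rw [Finset.sum_comm]
  apply Finset.sum_congr rfl
  intro w _
  rw [Finset.sum_sub_distrib]

lemma sum_law_le {p c : ℝ} (hp0 : 0 ≤ p) (hp1 : p ≤ 1) (hc0 : 0 ≤ c) (hc1 : c ≤ 1)
    (z t : ℕ) (F : Finset ℕ) : ∑ j ∈ F, law p c z t j ≤ 1 := by
  have h1 : ∑ j ∈ F, law p c z t j ≤ ∑ j ∈ F ∪ Finset.range (z + t + 1), law p c z t j := by
    apply Finset.sum_le_sum_of_subset_of_nonneg Finset.subset_union_left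
    intro j _ _; exact law_nonneg hp0 hp1 hc0 hc1 z t j
  have h2 : ∑ j ∈ F ∪ Finset.range (z + t + 1), law p c z t j
      = ∑ j ∈ Finset.range (z + t + 1), law p c z t j := by
    refine (Finset.sum_subset Finset.subset_union_right ?_).symm
    intro j _ hj
    rw [Finset.mem_range] at hj
    exact law_eq_zero p c z t j (by omega)
  rw [h2] at h1
  rw [law_sum p c z t (z + t + 1) le_rfl] at h1
  exact h1

lemma sum_shf_law_le {p c : ℝ} (hp0 : 0 ≤ p) (hp1 : p ≤ 1) (hc0 : 0 ≤ c) (hc1 : c ≤ 1)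
    (z t : ℕ) (F : Finset ℕ) : ∑ j ∈ F, shf (law p c z t) j ≤ 1 := by
  obtain ⟨M, hM⟩ := F.exists_nat_subset_range
  have hnn : ∀ j, 0 ≤ shf (law p c z t) j := by
    intro j; cases j with
    | zero => exact le_rfl
    | succ k => exact law_nonneg hp0 hp1 hc0 hc1 z t k
  have h1 : ∑ j ∈ F, shf (law p c z t) j ≤ ∑ j ∈ Finset.range (M + 1), shf (law p c z t) j := by
    apply Finset.sum_le_sum_of_subset_of_nonneg
    · exact hM.trans (Finset.range_subset_range.mpr (by omega))
    · intro j _ _; exact hnn j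
  have h2 : ∑ j ∈ Finset.range (M + 1), shf (law p c z t) j
      = ∑ j ∈ Finset.range M, law p c z t j := by
    rw [Finset.sum_range_succ' (fun j => shf (law p c z t) j) M]
    simp only [shf, add_zero]
  rw [h2] at h1
  exact h1.trans (sum_law_le hp0 hp1 hc0 hc1 z t _)

lemma sum_law_nonneg {p c : ℝ} (hp0 : 0 ≤ p) (hp1 : p ≤ 1) (hc0 : 0 ≤ c) (hc1 : c ≤ 1)
    (z t : ℕ) (F : Finset ℕ) : 0 ≤ ∑ j ∈ F, law p c z t j :=
  Finset.sum_nonneg fun j _ => law_nonneg hp0 hp1 hc0 hc1 z t j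

lemma sum_shf_law_nonneg {p c : ℝ} (hp0 : 0 ≤ p) (hp1 : p ≤ 1) (hc0 : 0 ≤ c) (hc1 : c ≤ 1)
    (z t : ℕ) (F : Finset ℕ) : 0 ≤ ∑ j ∈ F, shf (law p c z t) j := by
  apply Finset.sum_nonneg
  intro j _
  cases j with
  | zero => exact le_rfl
  | succ k => exact law_nonneg hp0 hp1 hc0 hc1 z t k

section TVBounds

variable {p c pt : ℝ} (hp0 : 0 ≤ p) (hp1 : p ≤ 1) (hc0 : 0 ≤ c) (hc1 : c ≤ 1)
  (hpt0 : 0 ≤ pt) (hpt1 : pt ≤ 1) (hpt : (1 - c * (1 - p)) * pt = p)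
  (hα0 : 0 ≤ 1 - c * (1 - p))

include hp0 hp1 hc0 hc1 hpt0 hpt1 hpt hα0

lemma mass_diff_abs_le {x y : ℕ} (hxy : x ≤ y) (t : ℕ) (A : Set ℕ) :
    |massOf (law p c y t) A - massOf (law p c x t) A|
      ≤ ((y : ℝ) - (x : ℝ)) * (1 - c * (1 - p)) ^ t := by
  classical
  rw [mass_diff p c pt hpt hxy t A]
  rw [abs_mul, abs_of_nonneg (pow_nonneg hα0 t)]
  have hb : |∑ w ∈ Finset.range (y - x),
      ((∑ j ∈ (Finset.range (y + t + 1)).filter (· ∈ A), shf (law pt c (x + w) t) j)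
        - ∑ j ∈ (Finset.range (y + t + 1)).filter (· ∈ A), law pt c (x + w) t j)|
      ≤ (y - x : ℕ) := by
    calc _ ≤ ∑ w ∈ Finset.range (y - x),
        |(∑ j ∈ (Finset.range (y + t + 1)).filter (· ∈ A), shf (law pt c (x + w) t) j)
          - ∑ j ∈ (Finset.range (y + t + 1)).filter (· ∈ A), law pt c (x + w) t j| :=
        Finset.abs_sum_le_sum_abs _ _
      _ ≤ ∑ w ∈ Finset.range (y - x), (1:ℝ) := by
          apply Finset.sum_le_sum
          intro w _
          rw [abs_sub_le_iff]
          constructor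
          · have h1 := sum_shf_law_le hpt0 hpt1 hc0 hc1 (x + w) t
              ((Finset.range (y + t + 1)).filter (· ∈ A))
            have h2 := sum_law_nonneg hpt0 hpt1 hc0 hc1 (x + w) t
              ((Finset.range (y + t + 1)).filter (· ∈ A))
            linarith
          · have h1 := sum_law_le hpt0 hpt1 hc0 hc1 (x + w) t
              ((Finset.range (y + t + 1)).filter (· ∈ A))
            have h2 := sum_shf_law_nonneg hpt0 hpt1 hc0 hc1 (x + w) t
              ((Finset.range (y + t + 1)).filter (· ∈ A))
            linarith
      _ = (y - x : ℕ) := by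
          rw [Finset.sum_const, nsmul_eq_mul, mul_one, Finset.card_range]
  have hcast : ((y - x : ℕ) : ℝ) = (y : ℝ) - (x : ℝ) := by
    rw [Nat.cast_sub hxy]
  calc (1 - c * (1 - p)) ^ t * |_| ≤ (1 - c * (1 - p)) ^ t * ((y - x : ℕ) : ℝ) := by
        exact mul_le_mul_of_nonneg_left hb (pow_nonneg hα0 t)
    _ = ((y : ℝ) - (x : ℝ)) * (1 - c * (1 - p)) ^ t := by rw [hcast]; ring

lemma tv_le {x y : ℕ} (hxy : x ≤ y) (t : ℕ) :
    tvDist (law p c y t) (law p c x t) ≤ ((y : ℝ) - (x : ℝ)) * (1 - c * (1 - p)) ^ t := by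
  apply ciSup_le
  intro A
  exact mass_diff_abs_le hp0 hp1 hc0 hc1 hpt0 hpt1 hpt hα0 hxy t A

lemma tv_bdd {x y : ℕ} (hxy : x ≤ y) (t : ℕ) :
    BddAbove (Set.range fun A : Set ℕ =>
      |massOf (law p c y t) A - massOf (law p c x t) A|) := by
  refine ⟨((y : ℝ) - (x : ℝ)) * (1 - c * (1 - p)) ^ t, ?_⟩
  rintro r ⟨A, rfl⟩
  exact mass_diff_abs_le hp0 hp1 hc0 hc1 hpt0 hpt1 hpt hα0 hxy t A

lemma tv_nonneg {x y : ℕ} (hxy : x ≤ y) (t : ℕ) :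
    0 ≤ tvDist (law p c y t) (law p c x t) := by
  have h := le_ciSup (tv_bdd hp0 hp1 hc0 hc1 hpt0 hpt1 hpt hα0 hxy t) (∅ : Set ℕ)
  have he : massOf (law p c y t) ∅ - massOf (law p c x t) ∅ = 0 := by
    simp [massOf]
  rw [he] at h
  simpa [tvDist] using h

omit hp0 hp1 hc0 hc1 hpt0 hpt1 hpt hα0 in
lemma filter_Iic (m N : ℕ) (inst : DecidablePred (· ∈ Set.Iic m)) (h : m < N) :
    @Finset.filter _ (· ∈ Set.Iic m) inst (Finset.range N) = Finset.range (m + 1) := by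
  ext j
  simp only [Finset.mem_filter, Finset.mem_range, Set.mem_Iic]
  omega

lemma tv_ge {x y : ℕ} (hxy : x ≤ y) (t : ℕ) (m : ℕ) (hm : m ≤ y + t) :
    (1 - c * (1 - p)) ^ t * ∑ w ∈ Finset.range (y - x), law pt c (x + w) t m
      ≤ tvDist (law p c y t) (law p c x t) := by
  have h := le_ciSup (tv_bdd hp0 hp1 hc0 hc1 hpt0 hpt1 hpt hα0 hxy t) (Set.Iic m)
  have hval : massOf (law p c y t) (Set.Iic m) - massOf (law p c x t) (Set.Iic m)
      = -((1 - c * (1 - p)) ^ t * ∑ w ∈ Finset.range (y - x), law pt c (x + w) t m) := by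
    rw [mass_diff p c pt hpt hxy t (Set.Iic m)]
    rw [filter_Iic m (y + t + 1) _ (by omega)]
    rw [← mul_neg, ← Finset.sum_neg_distrib]
    congr 1
    apply Finset.sum_congr rfl
    intro w _
    have h1 : ∑ j ∈ Finset.range (m + 1), shf (law pt c (x + w) t) j
        = ∑ j ∈ Finset.range m, law pt c (x + w) t j := by
      rw [Finset.sum_range_succ' (fun j => shf (law pt c (x + w) t) j) m]
      simp only [shf, add_zero]
    have h2 : ∑ j ∈ Finset.range (m + 1), law pt c (x + w) t j
        = ∑ j ∈ Finset.range m, law pt c (x + w) t j + law pt c (x + w) t m :=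
      Finset.sum_range_succ _ _
    rw [h1, h2]
    ring
  rw [hval] at h
  have habs : |-((1 - c * (1 - p)) ^ t * ∑ w ∈ Finset.range (y - x), law pt c (x + w) t m)|
      = (1 - c * (1 - p)) ^ t * ∑ w ∈ Finset.range (y - x), law pt c (x + w) t m := by
    rw [abs_neg, abs_of_nonneg]
    exact mul_nonneg (pow_nonneg hα0 t)
      (Finset.sum_nonneg fun w _ => law_nonneg hpt0 hpt1 hc0 hc1 (x + w) t m)
  rw [habs] at h
  exact h

end TVBounds

section Converge

variable {P c Pt : ℝ} (hP0 : 0 ≤ P) (hP1 : P ≤ 1) (hc0 : 0 ≤ c) (hc1 : c ≤ 1)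
  (hPt0 : 0 ≤ Pt) (hPt1 : Pt ≤ 1) (hPt : (1 - c * (1 - P)) * Pt = P)
  (hα0 : 0 ≤ 1 - c * (1 - P))

include hP0 hP1 hc0 hc1 hPt0 hPt1 hPt hα0 in
lemma law_start_diff_le (z i t j : ℕ) (hzi : z ≤ i) :
    |law P c i t j - law P c z t j| ≤ ((i : ℝ) - (z : ℝ)) * (1 - c * (1 - P)) ^ t := by
  rw [law_diff_gap P c Pt hPt hzi t j]
  rw [abs_mul, abs_of_nonneg (pow_nonneg hα0 t)]
  have hb : |∑ w ∈ Finset.range (i - z), (shf (law Pt c (z + w) t) j - law Pt c (z + w) t j)|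
      ≤ ((i - z : ℕ) : ℝ) := by
    calc _ ≤ ∑ w ∈ Finset.range (i - z),
        |shf (law Pt c (z + w) t) j - law Pt c (z + w) t j| := Finset.abs_sum_le_sum_abs _ _
      _ ≤ ∑ w ∈ Finset.range (i - z), (1:ℝ) := by
          apply Finset.sum_le_sum
          intro w _
          rw [abs_sub_le_iff]
          have hs0 : 0 ≤ shf (law Pt c (z + w) t) j := by
            cases j with
            | zero => exact le_rfl
            | succ k => exact law_nonneg hPt0 hPt1 hc0 hc1 (z + w) t k
          have hs1 : shf (law Pt c (z + w) t) j ≤ 1 := by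
            cases j with
            | zero => norm_num [shf]
            | succ k => exact law_le_one hPt0 hPt1 hc0 hc1 (z + w) t k
          have hl0 := law_nonneg hPt0 hPt1 hc0 hc1 (z + w) t j
          have hl1 := law_le_one hPt0 hPt1 hc0 hc1 (z + w) t j
          constructor <;> linarith
      _ = ((i - z : ℕ) : ℝ) := by
          rw [Finset.sum_const, nsmul_eq_mul, mul_one, Finset.card_range]
  have hcast : ((i - z : ℕ) : ℝ) = (i : ℝ) - (z : ℝ) := by rw [Nat.cast_sub hzi]
  rw [hcast] at hb
  calc (1 - c * (1 - P)) ^ t * |_| ≤ (1 - c * (1 - P)) ^ t * ((i:ℝ) - (z:ℝ)) :=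
        mul_le_mul_of_nonneg_left hb (pow_nonneg hα0 t)
    _ = ((i:ℝ) - (z:ℝ)) * (1 - c * (1 - P)) ^ t := by ring

include hP0 hP1 hc0 hc1 hPt0 hPt1 hPt hα0 in
lemma law_start_diff_le' (z i t j : ℕ) :
    |law P c i t j - law P c z t j| ≤ ((i : ℝ) + (z : ℝ)) * (1 - c * (1 - P)) ^ t := by
  rcases le_total z i with h | h
  · calc |law P c i t j - law P c z t j|
        ≤ ((i : ℝ) - (z : ℝ)) * (1 - c * (1 - P)) ^ t :=
          law_start_diff_le hP0 hP1 hc0 hc1 hPt0 hPt1 hPt hα0 z i t j h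
      _ ≤ ((i : ℝ) + (z : ℝ)) * (1 - c * (1 - P)) ^ t := by
          apply mul_le_mul_of_nonneg_right _ (pow_nonneg hα0 t)
          have : (0:ℝ) ≤ (z:ℝ) := Nat.cast_nonneg z
          linarith
  · rw [abs_sub_comm]
    calc |law P c z t j - law P c i t j|
        ≤ ((z : ℝ) - (i : ℝ)) * (1 - c * (1 - P)) ^ t :=
          law_start_diff_le hP0 hP1 hc0 hc1 hPt0 hPt1 hPt hα0 i z t j h
      _ ≤ ((i : ℝ) + (z : ℝ)) * (1 - c * (1 - P)) ^ t := by
          apply mul_le_mul_of_nonneg_right _ (pow_nonneg hα0 t)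
          have : (0:ℝ) ≤ (i:ℝ) := Nat.cast_nonneg i
          linarith

end Converge

section Stationary

variable {P c : ℝ} (hP0 : 0 ≤ P) (hP1 : P ≤ 1) (hc0 : 0 ≤ c) (hc1 : c ≤ 1)
  (piT : ℕ → ℝ) (hpi0 : ∀ k, 0 ≤ piT k) (hpi1 : ∑' k, piT k = 1)
  (hpis : ∀ j, ∑' i, piT i * stepFn P c i j = piT j)

include hpi0 hpi1 in
lemma piT_summable : Summable piT := by
  by_contra h
  rw [tsum_eq_zero_of_not_summable h] at hpi1
  norm_num at hpi1

include hP0 hP1 hc0 hc1 hpi0 hpi1 hpis in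
lemma stationary_iter : ∀ t j, ∑' i, piT i * law P c i t j = piT j := by
  have hsum := piT_summable piT hpi0 hpi1
  intro t
  induction t with
  | zero =>
    intro j
    have : ∀ i, i ≠ j → piT i * law P c i 0 j = 0 := by
      intro i hi
      simp only [law]
      rw [if_neg (fun h => hi h.symm), mul_zero]
    rw [tsum_eq_single j this]
    simp [law]
  | succ t ih =>
    intro j
    -- f (i,k) = piT i * law P c i t k * stepFn P c k j
    have hslice : ∀ i, Summable (fun k => piT i * law P c i t k * stepFn P c k j) := by
      intro i
      apply summable_of_ne_finset_zero (s := Finset.range (i + t + 1))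
      intro k hk
      rw [Finset.mem_range] at hk
      rw [law_eq_zero P c i t k (by omega), mul_zero, zero_mul]
    have hslice_sum : ∀ i, ∑' k, piT i * law P c i t k * stepFn P c k j ≤ piT i := by
      intro i
      have : ∑' k, piT i * law P c i t k * stepFn P c k j
          = ∑ k ∈ Finset.range (i + t + 1), piT i * law P c i t k * stepFn P c k j := by
        apply tsum_eq_sum
        intro k hk
        rw [Finset.mem_range] at hk
        rw [law_eq_zero P c i t k (by omega), mul_zero, zero_mul]
      rw [this]
      calc ∑ k ∈ Finset.range (i + t + 1), piT i * law P c i t k * stepFn P c k j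
          ≤ ∑ k ∈ Finset.range (i + t + 1), piT i * law P c i t k := by
            apply Finset.sum_le_sum
            intro k _
            have h1 : 0 ≤ piT i * law P c i t k :=
              mul_nonneg (hpi0 i) (law_nonneg hP0 hP1 hc0 hc1 i t k)
            have h2 := stepFn_le_one hP0 hP1 hc0 hc1 k j
            nlinarith [stepFn_nonneg hP0 hP1 hc0 hc1 k j]
        _ = piT i * ∑ k ∈ Finset.range (i + t + 1), law P c i t k := by
            rw [Finset.mul_sum]
        _ = piT i := by rw [law_sum P c i t (i + t + 1) le_rfl, mul_one]
    have hnn : ∀ i k, 0 ≤ piT i * law P c i t k * stepFn P c k j := fun i k =>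
      mul_nonneg (mul_nonneg (hpi0 i) (law_nonneg hP0 hP1 hc0 hc1 i t k))
        (stepFn_nonneg hP0 hP1 hc0 hc1 k j)
    have huncurry : Summable
        (Function.uncurry fun i k => piT i * law P c i t k * stepFn P c k j) := by
      refine (summable_prod_of_nonneg (fun q => hnn q.1 q.2)).mpr ⟨hslice, ?_⟩
      apply Summable.of_nonneg_of_le _ hslice_sum hsum
      intro i
      exact tsum_nonneg fun k => hnn i k
    have hcol : ∀ k, Summable (fun i => piT i * law P c i t k * stepFn P c k j) := by
      intro k
      apply Summable.of_nonneg_of_le (fun i => hnn i k) _ hsum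
      intro i
      have h1 := law_le_one hP0 hP1 hc0 hc1 i t k
      have h2 := stepFn_le_one hP0 hP1 hc0 hc1 k j
      have lnn := law_nonneg hP0 hP1 hc0 hc1 i t k
      calc piT i * law P c i t k * stepFn P c k j
          ≤ piT i * law P c i t k :=
            mul_le_of_le_one_right (mul_nonneg (hpi0 i) lnn) h2
        _ ≤ piT i := mul_le_of_le_one_right (hpi0 i) h1
    calc ∑' i, piT i * law P c i (t+1) j
        = ∑' i, ∑' k, piT i * law P c i t k * stepFn P c k j := by
          apply tsum_congr
          intro i
          show piT i * (∑' k, law P c i t k * stepFn P c k j) = _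
          rw [← tsum_mul_left]
          apply tsum_congr
          intro k
          ring
      _ = ∑' k, ∑' i, piT i * law P c i t k * stepFn P c k j :=
          (huncurry.tsum_comm).symm
      _ = ∑' k, (∑' i, piT i * law P c i t k) * stepFn P c k j := by
          apply tsum_congr
          intro k
          rw [← tsum_mul_right]
      _ = ∑' k, piT k * stepFn P c k j := by
          apply tsum_congr
          intro k
          rw [ih k]
      _ = piT j := hpis j

end Stationary

section LawTendsto

variable {P c Pt : ℝ} (hP0 : 0 < P) (hP1 : P < 1) (hc0 : 0 < c) (hc1 : c ≤ 1)
  (hPt0 : 0 ≤ Pt) (hPt1 : Pt ≤ 1) (hPt : (1 - c * (1 - P)) * Pt = P)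
  (piT : ℕ → ℝ) (hpi0 : ∀ k, 0 ≤ piT k) (hpi1 : ∑' k, piT k = 1)
  (hpis : ∀ j, ∑' i, piT i * stepFn P c i j = piT j)

include hP0 hP1 hc0 hc1 hPt0 hPt1 hPt hpi0 hpi1 hpis in
lemma law_tendsto_pi (z j : ℕ) :
    Tendsto (fun t => law P c z t j) atTop (nhds (piT j)) := by
  have hα0 : (0:ℝ) ≤ 1 - c * (1 - P) := by nlinarith
  have hα1 : 1 - c * (1 - P) < 1 := by nlinarith
  have hP0' : 0 ≤ P := le_of_lt hP0
  have hP1' : P ≤ 1 := le_of_lt hP1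
  have hc0' : 0 ≤ c := le_of_lt hc0
  have hsum := piT_summable piT hpi0 hpi1
  have hstat := stationary_iter hP0' hP1' hc0' hc1 piT hpi0 hpi1 hpis
  have expand : ∀ t, piT j - law P c z t j
      = ∑' i, piT i * (law P c i t j - law P c z t j) := by
    intro t
    have hs1 : Summable (fun i => piT i * law P c i t j) := by
      apply Summable.of_nonneg_of_le _ _ hsum
      · intro i; exact mul_nonneg (hpi0 i) (law_nonneg hP0' hP1' hc0' hc1 i t j)
      · intro i
        exact mul_le_of_le_one_right (hpi0 i) (law_le_one hP0' hP1' hc0' hc1 i t j)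
    have hs2 : Summable (fun i => piT i * law P c z t j) := hsum.mul_right _
    have h1 : ∑' i, piT i * law P c i t j = piT j := hstat t j
    have h2 : ∑' i : ℕ, piT i * law P c z t j = law P c z t j := by
      rw [tsum_mul_right, hpi1, one_mul]
    calc piT j - law P c z t j
        = (∑' i, piT i * law P c i t j) - ∑' i : ℕ, piT i * law P c z t j := by
          rw [h1, h2]
      _ = ∑' i, (piT i * law P c i t j - piT i * law P c z t j) := (hs1.tsum_sub hs2).symm
      _ = ∑' i, piT i * (law P c i t j - law P c z t j) := by
          apply tsum_congr; intro i; ring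
  have key : Tendsto (fun t => ∑' i, piT i * (law P c i t j - law P c z t j)) atTop
      (nhds 0) := by
    have h0 : (0:ℝ) = ∑' _ : ℕ, (0:ℝ) := tsum_zero.symm
    rw [h0]
    apply tendsto_tsum_of_dominated_convergence hsum
    · intro i
      apply squeeze_zero_norm
        (a := fun t => (piT i * ((i:ℝ) + (z:ℝ))) * (1 - c * (1 - P)) ^ t)
      · intro t
        rw [Real.norm_eq_abs, abs_mul, abs_of_nonneg (hpi0 i)]
        have hd := law_start_diff_le' hP0' hP1' hc0' hc1 hPt0 hPt1 hPt hα0 z i t j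
        calc piT i * |law P c i t j - law P c z t j|
            ≤ piT i * (((i:ℝ) + (z:ℝ)) * (1 - c * (1 - P)) ^ t) :=
              mul_le_mul_of_nonneg_left hd (hpi0 i)
          _ = (piT i * ((i:ℝ) + (z:ℝ))) * (1 - c * (1 - P)) ^ t := by ring
      · have := (tendsto_pow_atTop_nhds_zero_of_lt_one hα0 hα1).const_mul
          (piT i * ((i:ℝ) + (z:ℝ)))
        simpa using this
    · apply Filter.Eventually.of_forall
      intro t i
      rw [Real.norm_eq_abs, abs_mul, abs_of_nonneg (hpi0 i)]
      have h1 := law_le_one hP0' hP1' hc0' hc1 i t j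
      have h2 := law_nonneg hP0' hP1' hc0' hc1 i t j
      have h3 := law_le_one hP0' hP1' hc0' hc1 z t j
      have h4 := law_nonneg hP0' hP1' hc0' hc1 z t j
      have : |law P c i t j - law P c z t j| ≤ 1 := by
        rw [abs_sub_le_iff]; constructor <;> linarith
      calc piT i * |law P c i t j - law P c z t j| ≤ piT i * 1 :=
            mul_le_mul_of_nonneg_left this (hpi0 i)
        _ = piT i := mul_one _
  have key2 : Tendsto (fun t => piT j - law P c z t j) atTop (nhds 0) := by
    have : (fun t => piT j - law P c z t j)
        = fun t => ∑' i, piT i * (law P c i t j - law P c z t j) := funext expand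
    rw [this]
    exact key
  have h5 : Tendsto (fun t : ℕ => piT j - (piT j - law P c z t j)) atTop
      (nhds (piT j - 0)) :=
    Filter.Tendsto.sub tendsto_const_nhds key2
  simpa using h5

end LawTendsto

lemma c_one_contra (p : ℝ) (piT : ℕ → ℝ) (hpi1 : ∑' k, piT k = 1)
    (hpis : ∀ j, ∑' i : ℕ, piT i * stepFn 1 1 i j = piT j) : False := by
  have hstep : ∀ i j : ℕ, stepFn 1 1 i j = if j = i + 1 then (1:ℝ) else 0 := by
    intro i j
    rw [stepFn_eq]
    norm_num
  have h0 : piT 0 = 0 := by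
    rw [← hpis 0]
    have : (fun i : ℕ => piT i * stepFn 1 1 i 0) = fun _ => 0 := by
      funext i
      rw [hstep, if_neg (by omega), mul_zero]
    rw [this, tsum_zero]
  have hind : ∀ n, piT (n + 1) = piT n := by
    intro n
    rw [← hpis (n + 1)]
    rw [tsum_eq_single n]
    · rw [hstep, if_pos rfl, mul_one]
    · intro i hi
      rw [hstep, if_neg (by omega), mul_zero]
  have hall : ∀ n, piT n = 0 := by
    intro n
    induction n with
    | zero => exact h0
    | succ n ih => rw [hind n, ih]
  rw [show piT = fun _ => (0:ℝ) from funext hall, tsum_zero] at hpi1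
  norm_num at hpi1

/-- **Corollary 3.4.** Let `α = 1 - c(1-p)`, `p̃ = p/α`, and let `π^{(p̃)}` be the stationary
distribution of the chain with parameters `(p̃, c)`. If `j*` maximizes `π^{(p̃)}`, then for
`x < y`, `π^{(p̃)}(j*) ≤ liminf_t d_t(x,y)/((y-x)α^t) ≤ limsup_t d_t(x,y)/((y-x)α^t) ≤ 1`;
in particular `lim_t (1/t) ln d_t(x,y) = ln α`. -/
theorem tv_sharp_rate
    (p c : ℝ) (hp : p ∈ Set.Ioo (0 : ℝ) 1) (hc : c ∈ Set.Ioc (0 : ℝ) 1)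
    (piT : ℕ → ℝ) (hpi0 : ∀ k, 0 ≤ piT k) (hpi1 : ∑' k, piT k = 1)
    (hpis : ∀ j, ∑' i, piT i * stepFn (p / (1 - c * (1 - p))) c i j = piT j)
    (jstar : ℕ) (hjstar : ∀ j, piT j ≤ piT jstar)
    (x y : ℕ) (hxy : x < y) :
    (piT jstar ≤
        liminf (fun t : ℕ =>
          tvDist (law p c y t) (law p c x t) / (((y : ℝ) - (x : ℝ)) * (1 - c * (1 - p)) ^ t))
          atTop) ∧
    (liminf (fun t : ℕ =>
          tvDist (law p c y t) (law p c x t) / (((y : ℝ) - (x : ℝ)) * (1 - c * (1 - p)) ^ t))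
          atTop ≤
        limsup (fun t : ℕ =>
          tvDist (law p c y t) (law p c x t) / (((y : ℝ) - (x : ℝ)) * (1 - c * (1 - p)) ^ t))
          atTop) ∧
    (limsup (fun t : ℕ =>
          tvDist (law p c y t) (law p c x t) / (((y : ℝ) - (x : ℝ)) * (1 - c * (1 - p)) ^ t))
          atTop ≤ 1) ∧
    Tendsto (fun t : ℕ => Real.log (tvDist (law p c y t) (law p c x t)) / (t : ℝ)) atTop
      (nhds (Real.log (1 - c * (1 - p)))) := by
  obtain ⟨hp0, hp1⟩ := hp
  obtain ⟨hc0, hc1⟩ := hc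
  rcases eq_or_lt_of_le hc1 with hceq | hclt
  · exfalso
    rw [hceq] at hpis
    have hred : p / (1 - 1 * (1 - p)) = 1 := by
      rw [show (1:ℝ) - 1 * (1 - p) = p by ring]
      exact div_self (ne_of_gt hp0)
    rw [hred] at hpis
    exact c_one_contra p piT hpi1 hpis
  · -- main case c < 1
    have hα0 : (0:ℝ) < 1 - c * (1 - p) := by nlinarith
    have hα1 : 1 - c * (1 - p) < 1 := by nlinarith
    set pt : ℝ := p / (1 - c * (1 - p)) with hptdef
    have hpt : (1 - c * (1 - p)) * pt = p := by
      rw [hptdef]; field_simp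
    have hpt0 : 0 < pt := div_pos hp0 hα0
    have hpt1 : pt < 1 := by rw [hptdef, div_lt_one hα0]; nlinarith
    have hαt0 : (0:ℝ) < 1 - c * (1 - pt) := by nlinarith
    set ptt : ℝ := pt / (1 - c * (1 - pt)) with hpttdef
    have hptt : (1 - c * (1 - pt)) * ptt = pt := by rw [hpttdef]; field_simp
    have hptt0 : 0 ≤ ptt := le_of_lt (div_pos hpt0 hαt0)
    have hptt1 : ptt ≤ 1 := by rw [hpttdef, div_le_one hαt0]; nlinarith
    have hp0' : 0 ≤ p := hp0.le
    have hp1' : p ≤ 1 := hp1.le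
    have hc0' : 0 ≤ c := hc0.le
    have hpt0' : 0 ≤ pt := hpt0.le
    have hpt1' : pt ≤ 1 := hpt1.le
    have hα0' : (0:ℝ) ≤ 1 - c * (1 - p) := hα0.le
    have hxy' : x ≤ y := hxy.le
    have hyx : (0:ℝ) < (y:ℝ) - (x:ℝ) := by
      have : (x:ℝ) < (y:ℝ) := Nat.cast_lt.mpr hxy
      linarith
    -- abbreviations
    set r : ℕ → ℝ := fun t : ℕ =>
      tvDist (law p c y t) (law p c x t) / (((y : ℝ) - (x : ℝ)) * (1 - c * (1 - p)) ^ t)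
      with hrdef
    set s : ℕ → ℝ := fun t : ℕ =>
      ∑ w ∈ Finset.range (y - x), law pt c (x + w) t jstar with hsdef
    have hr_le_one : ∀ t, r t ≤ 1 := by
      intro t
      apply div_le_one_of_le₀
      · exact tv_le hp0' hp1' hc0' hc1 hpt0' hpt1' hpt hα0' hxy' t
      · positivity
    have hr_nonneg : ∀ t, 0 ≤ r t := by
      intro t
      apply div_nonneg
      · exact tv_nonneg hp0' hp1' hc0' hc1 hpt0' hpt1' hpt hα0' hxy' t
      · positivity
    have hs_tendsto : Tendsto s atTop (nhds (((y:ℝ) - (x:ℝ)) * piT jstar)) := by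
      have hterm : ∀ w ∈ Finset.range (y - x),
          Tendsto (fun t => law pt c (x + w) t jstar) atTop (nhds (piT jstar)) := by
        intro w _
        exact law_tendsto_pi hpt0 hpt1 hc0 hc1 hptt0 hptt1 hptt piT hpi0 hpi1 hpis
          (x + w) jstar
      have h := tendsto_finset_sum (Finset.range (y - x)) hterm
      have hcard : ∑ _w ∈ Finset.range (y - x), piT jstar = ((y:ℝ) - (x:ℝ)) * piT jstar := by
        rw [Finset.sum_const, Finset.card_range, nsmul_eq_mul, Nat.cast_sub hxy']
      rw [hcard] at h
      exact h
    have hpj : 0 < piT jstar := by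
      rcases lt_or_ge 0 (piT jstar) with h | h
      · exact h
      · exfalso
        have hz : ∀ k, piT k = 0 := fun k => le_antisymm (le_trans (hjstar k) h) (hpi0 k)
        rw [show piT = fun _ => (0:ℝ) from funext hz, tsum_zero] at hpi1
        norm_num at hpi1
    have hlow : ∀ᶠ t in atTop, s t / ((y:ℝ) - (x:ℝ)) ≤ r t := by
      filter_upwards [eventually_ge_atTop jstar] with t ht
      have htv := tv_ge hp0' hp1' hc0' hc1 hpt0' hpt1' hpt hα0' hxy' t jstar (by omega)
      rw [hrdef, hsdef]
      simp only
      rw [div_le_div_iff₀ hyx (by positivity)]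
      have h2 := mul_le_mul_of_nonneg_right htv hyx.le
      calc (∑ w ∈ Finset.range (y - x), law pt c (x + w) t jstar)
            * (((y:ℝ) - (x:ℝ)) * (1 - c * (1 - p)) ^ t)
          = ((1 - c * (1 - p)) ^ t * ∑ w ∈ Finset.range (y - x), law pt c (x + w) t jstar)
            * ((y:ℝ) - (x:ℝ)) := by ring
        _ ≤ tvDist (law p c y t) (law p c x t) * ((y:ℝ) - (x:ℝ)) := h2
    have hu : Tendsto (fun t => s t / ((y:ℝ) - (x:ℝ))) atTop (nhds (piT jstar)) := by
      have h := hs_tendsto.div_const ((y:ℝ) - (x:ℝ))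
      have : ((y:ℝ) - (x:ℝ)) * piT jstar / ((y:ℝ) - (x:ℝ)) = piT jstar := by
        field_simp
      rw [this] at h
      exact h
    have g1 : piT jstar ≤ liminf r atTop := by
      rw [← hu.liminf_eq]
      exact liminf_le_liminf hlow hu.isBoundedUnder_ge
        (Filter.isCoboundedUnder_ge_of_le atTop hr_le_one)
    have g2 : liminf r atTop ≤ limsup r atTop := by
      exact liminf_le_limsup (Filter.isBoundedUnder_of ⟨1, hr_le_one⟩)
        (Filter.isBoundedUnder_of ⟨0, hr_nonneg⟩)
    have g3 : limsup r atTop ≤ 1 := by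
      exact limsup_le_of_le (Filter.isCoboundedUnder_le_of_le atTop hr_nonneg)
        (Filter.Eventually.of_forall hr_le_one)
    refine ⟨g1, g2, g3, ?_⟩
    -- the log limit
    have hs_ub : ∀ t, s t ≤ (y:ℝ) - (x:ℝ) := by
      intro t
      rw [hsdef]
      simp only
      calc ∑ w ∈ Finset.range (y - x), law pt c (x + w) t jstar
          ≤ ∑ _w ∈ Finset.range (y - x), (1:ℝ) := by
            apply Finset.sum_le_sum
            intro w _
            exact law_le_one hpt0' hpt1' hc0' hc1 (x + w) t jstar
        _ = ((y - x : ℕ):ℝ) := by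
            rw [Finset.sum_const, Finset.card_range, nsmul_eq_mul, mul_one]
        _ = (y:ℝ) - (x:ℝ) := by rw [Nat.cast_sub hxy']
    set L : ℝ := ((y:ℝ) - (x:ℝ)) * piT jstar with hLdef
    have hL : 0 < L := mul_pos hyx hpj
    have hsev : ∀ᶠ t in atTop, L / 2 < s t :=
      hs_tendsto.eventually (eventually_gt_nhds (by linarith))
    have hlog_s : Tendsto (fun t : ℕ => Real.log (s t) / (t:ℝ)) atTop (nhds 0) := by
      apply squeeze_zero_norm'
        (a := fun t : ℕ => (|Real.log (L/2)| + |Real.log ((y:ℝ) - (x:ℝ))|) / (t:ℝ))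
      · filter_upwards [hsev, eventually_ge_atTop 1] with t hst ht1
        have ht0 : (0:ℝ) < (t:ℝ) := by exact_mod_cast Nat.lt_of_lt_of_le Nat.zero_lt_one ht1
        have hst0 : 0 < s t := (half_pos hL).trans hst
        have habs : |Real.log (s t)| ≤ |Real.log (L/2)| + |Real.log ((y:ℝ) - (x:ℝ))| := by
          rw [abs_le]
          constructor
          · have h1 : Real.log (L/2) ≤ Real.log (s t) :=
              Real.log_le_log (half_pos hL) hst.le
            have h2 := neg_abs_le (Real.log (L/2))
            have h3 := abs_nonneg (Real.log ((y:ℝ) - (x:ℝ)))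
            linarith
          · have h1 : Real.log (s t) ≤ Real.log ((y:ℝ) - (x:ℝ)) :=
              Real.log_le_log hst0 (hs_ub t)
            have h2 := le_abs_self (Real.log ((y:ℝ) - (x:ℝ)))
            have h3 := abs_nonneg (Real.log (L/2))
            linarith
        rw [Real.norm_eq_abs, abs_div, abs_of_nonneg ht0.le]
        exact div_le_div_of_nonneg_right habs ht0.le
      · exact tendsto_const_div_atTop_nhds_zero_nat _
    have hlog_c : Tendsto (fun t : ℕ => Real.log ((y:ℝ) - (x:ℝ)) / (t:ℝ)) atTop (nhds 0) :=
      tendsto_const_div_atTop_nhds_zero_nat _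
    have hlower : Tendsto
        (fun t : ℕ => Real.log (1 - c * (1 - p)) + Real.log (s t) / (t:ℝ)) atTop
        (nhds (Real.log (1 - c * (1 - p)))) := by
      have h := (tendsto_const_nhds :
        Tendsto (fun _ : ℕ => Real.log (1 - c * (1 - p))) atTop _).add hlog_s
      rw [add_zero] at h
      exact h
    have hupper : Tendsto
        (fun t : ℕ => Real.log (1 - c * (1 - p)) + Real.log ((y:ℝ) - (x:ℝ)) / (t:ℝ)) atTop
        (nhds (Real.log (1 - c * (1 - p)))) := by
      have h := (tendsto_const_nhds :
        Tendsto (fun _ : ℕ => Real.log (1 - c * (1 - p))) atTop _).add hlog_c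
      rw [add_zero] at h
      exact h
    apply tendsto_of_tendsto_of_tendsto_of_le_of_le' hlower hupper
    · -- lower bound eventually
      filter_upwards [hsev, eventually_ge_atTop (jstar + 1)] with t hst ht1
      have ht0 : (0:ℝ) < (t:ℝ) := by
        have : 0 < t := by omega
        exact_mod_cast this
      have hst0 : 0 < s t := (half_pos hL).trans hst
      have htv := tv_ge hp0' hp1' hc0' hc1 hpt0' hpt1' hpt hα0' hxy' t jstar (by omega)
      have htv' : (1 - c * (1 - p)) ^ t * s t ≤ tvDist (law p c y t) (law p c x t) := by
        rw [hsdef]; exact htv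
      have hlog1 : Real.log ((1 - c * (1 - p)) ^ t * s t)
          ≤ Real.log (tvDist (law p c y t) (law p c x t)) :=
        Real.log_le_log (by positivity) htv'
      rw [Real.log_mul (by positivity) hst0.ne', Real.log_pow] at hlog1
      have heq : Real.log (1 - c * (1 - p)) + Real.log (s t) / (t:ℝ)
          = ((t:ℝ) * Real.log (1 - c * (1 - p)) + Real.log (s t)) / (t:ℝ) := by
        field_simp
      rw [heq]
      exact (div_le_div_iff_of_pos_right ht0).mpr hlog1
    · -- upper bound eventually
      filter_upwards [hsev, eventually_ge_atTop (jstar + 1)] with t hst ht1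
      have ht0 : (0:ℝ) < (t:ℝ) := by
        have : 0 < t := by omega
        exact_mod_cast this
      have hst0 : 0 < s t := (half_pos hL).trans hst
      have htv := tv_ge hp0' hp1' hc0' hc1 hpt0' hpt1' hpt hα0' hxy' t jstar (by omega)
      have htv' : (1 - c * (1 - p)) ^ t * s t ≤ tvDist (law p c y t) (law p c x t) := by
        rw [hsdef]; exact htv
      have hdpos : 0 < tvDist (law p c y t) (law p c x t) :=
        lt_of_lt_of_le (by positivity) htv'
      have hub := tv_le hp0' hp1' hc0' hc1 hpt0' hpt1' hpt hα0' hxy' t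
      have hlog1 : Real.log (tvDist (law p c y t) (law p c x t))
          ≤ Real.log (((y:ℝ) - (x:ℝ)) * (1 - c * (1 - p)) ^ t) :=
        Real.log_le_log hdpos hub
      rw [Real.log_mul hyx.ne' (by positivity), Real.log_pow] at hlog1
      have heq : Real.log (1 - c * (1 - p)) + Real.log ((y:ℝ) - (x:ℝ)) / (t:ℝ)
          = (Real.log ((y:ℝ) - (x:ℝ)) + (t:ℝ) * Real.log (1 - c * (1 - p))) / (t:ℝ) := by
        field_simp
        ring
      rw [heq]
      exact (div_le_div_iff_of_pos_right ht0).mpr hlog1
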